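/- Let F be a C⁴ even function on [-y₀, y₀] (y₀ > 0), positive on (-y₀, y₀), vanishing together with its first four derivatives at ±y₀, and satisfying |F|^m |F⁽⁵⁾|^n F⁽⁵⁾ + β F y = 0 on (-y₀, y₀) for some β > 0, n ≥ 0, m ∈ ℝ. Then no such F exists. -/

import Mathlib

open Set

lemma posAux {a : ℝ} (g : ℝ → ℝ) (ha : a < 0) (hc : ContinuousOn g (Icc a 0))
    (h0 : g a = 0) (hd : ∀ x ∈ Ioo a 0, 0 < deriv g x) :
    ∀ x ∈ Ioc a 0, 0 < g x := by
  have hm : StrictMonoOn g (Icc a 0) :=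
    strictMonoOn_of_deriv_pos (convex_Icc a 0) hc (by rwa [interior_Icc])
  intro x hx
  have := hm (left_mem_Icc.2 ha.le) (Ioc_subset_Icc_self hx) hx.1
  simpa [h0] using this

/-- Nonexistence of symmetric positive compactly supported source-type
profiles: there is no even `C⁴` function `F` on `[-y₀,y₀]`, positive on
`(-y₀,y₀)`, vanishing with its first four derivatives at `±y₀`, satisfying
`|F|^m |F⁽⁵⁾|^n F⁽⁵⁾ + β F y = 0` on `(-y₀,y₀)` with `β > 0`, `n ≥ 0`. -/
theorem stmt13 (y₀ β n m : ℝ) (hy₀ : 0 < y₀) (hβ : 0 < β) (hn : 0 ≤ n) :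
    ¬ ∃ F : ℝ → ℝ,
      (∀ y : ℝ, F (-y) = F y) ∧
      ContDiffOn ℝ 4 F (Icc (-y₀) y₀) ∧
      (∀ y ∈ Ioo (-y₀) y₀, 0 < F y) ∧
      (∀ j ≤ 4, iteratedDerivWithin j F (Icc (-y₀) y₀) y₀ = 0) ∧
      (∀ j ≤ 4, iteratedDerivWithin j F (Icc (-y₀) y₀) (-y₀) = 0) ∧
      (∀ y ∈ Ioo (-y₀) y₀,
        |F y| ^ m * |iteratedDerivWithin 5 F (Icc (-y₀) y₀) y| ^ n *
          iteratedDerivWithin 5 F (Icc (-y₀) y₀) y + β * F y * y = 0) := by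
  rintro ⟨F, heven, hC4, hpos, hzR, hzL, heq⟩
  set s : Set ℝ := Icc (-y₀) y₀ with hsdef
  have hy0' : -y₀ < (0:ℝ) := by linarith
  have hs : UniqueDiffOn ℝ s := uniqueDiffOn_Icc (by linarith)
  have hsub : Icc (-y₀) (0:ℝ) ⊆ s := Icc_subset_Icc le_rfl hy₀.le
  have hnhds : ∀ x ∈ Ioo (-y₀) (0:ℝ), s ∈ nhds x := by
    intro x hx
    exact Icc_mem_nhds hx.1 (lt_trans hx.2 hy₀)
  -- Step 1: the fifth derivative is positive on (-y₀, 0)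
  have hF5 : ∀ x ∈ Ioo (-y₀) (0:ℝ), 0 < iteratedDerivWithin 5 F s x := by
    intro x hx
    have hx' : x ∈ Ioo (-y₀) y₀ := ⟨hx.1, lt_trans hx.2 hy₀⟩
    have hFp := hpos x hx'
    have he := heq x hx'
    set G := iteratedDerivWithin 5 F s x with hG
    have hA : 0 < |F x| ^ m := Real.rpow_pos_of_pos (abs_pos.2 hFp.ne') m
    have hB : 0 ≤ |G| ^ n := Real.rpow_nonneg (abs_nonneg _) n
    have hrhs : 0 < -(β * F x * x) := by nlinarith [mul_pos (mul_pos hβ hFp) (neg_pos.2 hx.2)]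
    have hkey : 0 < |F x| ^ m * |G| ^ n * G := by linarith
    by_contra hGle
    push_neg at hGle
    nlinarith [mul_nonneg (mul_nonneg hA.le hB) (neg_nonneg.2 hGle)]
  -- Step 2: integrate down: each derivative is positive on (-y₀, 0]
  have step : ∀ j : ℕ, j ≤ 4 →
      (∀ x ∈ Ioo (-y₀) (0:ℝ), 0 < iteratedDerivWithin (j+1) F s x) →
      ∀ x ∈ Ioc (-y₀) (0:ℝ), 0 < iteratedDerivWithin j F s x := by
    intro j hj hder
    apply posAux _ hy0'
    · exact (hC4.continuousOn_iteratedDerivWithin (by exact_mod_cast hj) hs).mono hsub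
    · exact hzL j hj
    · intro x hx
      have hxs : x ∈ s := hsub (Ioo_subset_Icc_self hx)
      rw [← derivWithin_of_mem_nhds (hnhds x hx), ← iteratedDerivWithin_succ]
      exact hder x hx
  have h4 := step 4 le_rfl hF5
  have h3 := step 3 (by norm_num) (fun x hx => h4 x (Ioo_subset_Ioc_self hx))
  have h2 := step 2 (by norm_num) (fun x hx => h3 x (Ioo_subset_Ioc_self hx))
  have h1 := step 1 (by norm_num) (fun x hx => h2 x (Ioo_subset_Ioc_self hx))
  have hpos1 : 0 < iteratedDerivWithin 1 F s 0 := h1 0 (right_mem_Ioc.2 hy0')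
  -- Step 3: evenness forces the first derivative to vanish at 0
  have h0s : (0:ℝ) ∈ s := ⟨hy0'.le, hy₀.le⟩
  have h0n : s ∈ nhds (0:ℝ) := Icc_mem_nhds hy0' hy₀
  have hF0 : deriv F 0 = 0 := by
    have h1' : (fun y => F (-y)) = F := funext heven
    have := deriv_comp_neg (f := F) (x := (0:ℝ))
    rw [h1', neg_zero] at this
    linarith
  rw [iteratedDerivWithin_one, derivWithin_of_mem_nhds h0n, hF0] at hpos1
  exact lt_irrefl 0 hpos1
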